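/- Let A = {(ρ,θ) : π/4 ≤ θ ≤ 5π/4} and B = {(x,y) ∈ R² : y ≤ 0} be closed convex cones in R², and T = P_B ∘ P_A the alternating projection operator. For x₀ = (x, y) ∈ R² \ (A ∪ B), the iterates satisfy T^n(x₀) = ((x+y)/2^n, 0) for all n ≥ 1; in particular T^n(x₀) ≠ T^{n+1}(x₀) whenever x + y ≠ 0, so the method never reaches Fix T, yet T^n(x₀) → 0 ∈ Fix T. -/

import Mathlib

private lemma nsq (v : EuclideanSpace ℝ (Fin 2)) : ‖v‖ ^ 2 = (v 0) ^ 2 + (v 1) ^ 2 := by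
  rw [EuclideanSpace.norm_eq, Real.sq_sqrt (by positivity)]
  simp [Fin.sum_univ_two, sq_abs]

private lemma pt_apply (a b : ℝ) :
    (!₂[a, b] : EuclideanSpace ℝ (Fin 2)) 0 = a ∧ (!₂[a, b] : EuclideanSpace ℝ (Fin 2)) 1 = b :=
  ⟨rfl, rfl⟩

private lemma quadA (x0 x1 p0 p1 : ℝ) (hx : x1 < x0) (hmem : p0 ≤ p1)
    (h2 : (x0 - p0) ^ 2 + (x1 - p1) ^ 2 ≤
      (x0 - (x0 + x1) / 2) ^ 2 + (x1 - (x0 + x1) / 2) ^ 2) :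
    p0 = (x0 + x1) / 2 ∧ p1 = (x0 + x1) / 2 := by
  have h2' : (x0 - p0) ^ 2 + (x1 - p1) ^ 2 ≤ (x0 - x1) ^ 2 / 2 := by nlinarith [h2]
  have hab : x0 - x1 ≤ (x0 - p0) - (x1 - p1) := by linarith
  have h3 : ((x0 - p0) - (x1 - p1)) ^ 2 ≤ (x0 - x1) ^ 2 := by
    nlinarith [sq_nonneg ((x0 - p0) + (x1 - p1))]
  have h4 : (x0 - p0) - (x1 - p1) = x0 - x1 := by nlinarith
  have h5 : (x0 - p0) + (x1 - p1) = 0 := by nlinarith [sq_nonneg ((x0 - p0) + (x1 - p1))]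
  constructor <;> linarith

private lemma quadB (x0 x1 p0 p1 : ℝ) (hx : 0 < x1) (hmem : p1 ≤ 0)
    (h2 : (x0 - p0) ^ 2 + (x1 - p1) ^ 2 ≤ (x0 - x0) ^ 2 + (x1 - 0) ^ 2) :
    p0 = x0 ∧ p1 = 0 := by
  have h3 : (x1 - p1) ^ 2 ≥ x1 ^ 2 := by nlinarith
  have h4 : (x0 - p0) ^ 2 ≤ 0 := by nlinarith
  have h5 : x0 - p0 = 0 := by nlinarith [sq_nonneg (x0 - p0)]
  have h6 : (x1 - p1) ^ 2 = x1 ^ 2 := by nlinarith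
  have h7 : p1 = 0 := by nlinarith
  exact ⟨by linarith, h7⟩

/-- projection onto `{p | p 0 ≤ p 1}` when `x 1 < x 0`. -/
private lemma projA (PA : EuclideanSpace ℝ (Fin 2) → EuclideanSpace ℝ (Fin 2))
    (hPA : ∀ x, (PA x) 0 ≤ (PA x) 1 ∧ ∀ w : EuclideanSpace ℝ (Fin 2), w 0 ≤ w 1 →
      ‖x - PA x‖ ≤ ‖x - w‖)
    (x : EuclideanSpace ℝ (Fin 2)) (hx : x 1 < x 0) :
    PA x 0 = (x 0 + x 1) / 2 ∧ PA x 1 = (x 0 + x 1) / 2 := by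
  obtain ⟨hmem, hmin⟩ := hPA x
  set m := (x 0 + x 1) / 2 with hm
  obtain ⟨v, hv0, hv1⟩ : ∃ v : EuclideanSpace ℝ (Fin 2), v 0 = m ∧ v 1 = m :=
    ⟨!₂[m, m], rfl, rfl⟩
  have hw : v 0 ≤ v 1 := by rw [hv0, hv1]
  have h1 : ‖x - PA x‖ ≤ ‖x - v‖ := hmin _ hw
  have h2 : ‖x - PA x‖ ^ 2 ≤ ‖x - v‖ ^ 2 :=
    pow_le_pow_left₀ (norm_nonneg _) h1 2
  rw [nsq, nsq] at h2
  have e0 : (x - v) 0 = x 0 - m := by show x 0 - v 0 = x 0 - m; rw [hv0]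
  have e1 : (x - v) 1 = x 1 - m := by show x 1 - v 1 = x 1 - m; rw [hv1]
  have f0 : (x - PA x : EuclideanSpace ℝ (Fin 2)) 0 = x 0 - PA x 0 := rfl
  have f1 : (x - PA x : EuclideanSpace ℝ (Fin 2)) 1 = x 1 - PA x 1 := rfl
  rw [e0, e1, f0, f1] at h2
  exact quadA (x 0) (x 1) (PA x 0) (PA x 1) hx hmem h2

/-- projection onto `{p | p 1 ≤ 0}` when `0 < x 1`. -/
private lemma projB (PB : EuclideanSpace ℝ (Fin 2) → EuclideanSpace ℝ (Fin 2))
    (hPB : ∀ x, (PB x) 1 ≤ 0 ∧ ∀ w : EuclideanSpace ℝ (Fin 2), w 1 ≤ 0 →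
      ‖x - PB x‖ ≤ ‖x - w‖)
    (x : EuclideanSpace ℝ (Fin 2)) (hx : 0 < x 1) :
    PB x 0 = x 0 ∧ PB x 1 = 0 := by
  obtain ⟨hmem, hmin⟩ := hPB x
  obtain ⟨v, hv0, hv1⟩ : ∃ v : EuclideanSpace ℝ (Fin 2), v 0 = x 0 ∧ v 1 = 0 :=
    ⟨!₂[x 0, 0], rfl, rfl⟩
  have hw : v 1 ≤ 0 := le_of_eq hv1
  have h1 : ‖x - PB x‖ ≤ ‖x - v‖ := hmin _ hw
  have h2 : ‖x - PB x‖ ^ 2 ≤ ‖x - v‖ ^ 2 :=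
    pow_le_pow_left₀ (norm_nonneg _) h1 2
  rw [nsq, nsq] at h2
  have e0 : (x - v) 0 = x 0 - x 0 := by show x 0 - v 0 = _; rw [hv0]
  have e1 : (x - v) 1 = x 1 - 0 := by show x 1 - v 1 = _; rw [hv1]
  have f0 : (x - PB x : EuclideanSpace ℝ (Fin 2)) 0 = x 0 - PB x 0 := rfl
  have f1 : (x - PB x : EuclideanSpace ℝ (Fin 2)) 1 = x 1 - PB x 1 := rfl
  rw [e0, e1, f0, f1] at h2
  exact quadB (x 0) (x 1) (PB x 0) (PB x 1) hx hmem h2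

theorem stmt13 (A B : Set (EuclideanSpace ℝ (Fin 2)))
    (hA : A = {p | p 0 ≤ p 1})
    (hB : B = {p | p 1 ≤ 0})
    (PA PB T : EuclideanSpace ℝ (Fin 2) → EuclideanSpace ℝ (Fin 2))
    (hPA : ∀ x, PA x ∈ A ∧ ∀ w ∈ A, ‖x - PA x‖ ≤ ‖x - w‖)
    (hPB : ∀ x, PB x ∈ B ∧ ∀ w ∈ B, ‖x - PB x‖ ≤ ‖x - w‖)
    (hT : ∀ x, T x = PB (PA x))
    (x₀ : EuclideanSpace ℝ (Fin 2)) (hx₀ : x₀ ∉ A ∪ B) :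
    (∀ n : ℕ, 1 ≤ n → (T^[n] x₀) 0 = (x₀ 0 + x₀ 1) / 2 ^ n ∧ (T^[n] x₀) 1 = 0 ∧
      (x₀ 0 + x₀ 1 ≠ 0 → T^[n + 1] x₀ ≠ T^[n] x₀)) ∧
    Filter.Tendsto (fun n => T^[n] x₀) Filter.atTop (nhds 0) ∧ T 0 = 0 := by
  subst hA hB
  have hPA' : ∀ x, (PA x) 0 ≤ (PA x) 1 ∧ ∀ w : EuclideanSpace ℝ (Fin 2), w 0 ≤ w 1 →
      ‖x - PA x‖ ≤ ‖x - w‖ := fun x => ⟨(hPA x).1, fun w hw => (hPA x).2 w hw⟩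
  have hPB' : ∀ x, (PB x) 1 ≤ 0 ∧ ∀ w : EuclideanSpace ℝ (Fin 2), w 1 ≤ 0 →
      ‖x - PB x‖ ≤ ‖x - w‖ := fun x => ⟨(hPB x).1, fun w hw => (hPB x).2 w hw⟩
  simp only [Set.mem_union, Set.mem_setOf_eq, not_or, not_le] at hx₀
  obtain ⟨hx01, hx1⟩ := hx₀
  set s := x₀ 0 + x₀ 1 with hs
  have hspos : 0 < s := by linarith
  -- T applied to a point with x1 < x0 and 0 < x0 + x1 gives ((x0+x1)/2, 0)
  have keyT : ∀ x : EuclideanSpace ℝ (Fin 2), x 1 < x 0 → 0 < x 0 + x 1 →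
      T x = ![(x 0 + x 1) / 2, 0] := by
    intro x h1 h2
    have hA1 := projA PA hPA' x h1
    have hB1 := projB PB hPB' (PA x) (by rw [hA1.2]; linarith)
    rw [hT]
    funext i
    fin_cases i
    · show PB (PA x) 0 = (x 0 + x 1) / 2
      rw [hB1.1, hA1.1]
    · show PB (PA x) 1 = 0
      exact hB1.2
  -- iteration formula
  have iter : ∀ n : ℕ, 1 ≤ n → T^[n] x₀ = ![s / 2 ^ n, 0] := by
    intro n hn
    induction n with
    | zero => omega
    | succ k ih =>
      rcases Nat.eq_or_lt_of_le hn with h | h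
      · -- k = 0
        have hk : k = 0 := by omega
        subst hk
        simp only [zero_add, Function.iterate_one]
        rw [keyT x₀ hx01 (by linarith)]
        norm_num
        exact hs.symm
      · have hk : 1 ≤ k := by omega
        rw [Function.iterate_succ_apply', show T^[k] x₀ = !₂[s / 2 ^ k, 0] from WithLp.ofLp_injective (p := 2) (ih hk)]
        have hpos : 0 < s / 2 ^ k := by positivity
        have := keyT (!₂[s / 2 ^ k, 0]) (by show (0:ℝ) < s / 2 ^ k; exact hpos)
          (by show 0 < s / 2 ^ k + 0; linarith)
        rw [this]
        funext i
        fin_cases i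
        · show ((!₂[s / 2 ^ k, 0] : EuclideanSpace ℝ (Fin 2)) 0
            + (!₂[s / 2 ^ k, 0] : EuclideanSpace ℝ (Fin 2)) 1) / 2 = s / 2 ^ (k + 1)
          show (s / 2 ^ k + 0) / 2 = s / 2 ^ (k + 1)
          rw [pow_succ]; ring
        · rfl
  refine ⟨?_, ?_, ?_⟩
  · intro n hn
    have h1 := iter n hn
    have h2 := iter (n + 1) (by omega)
    refine ⟨by rw [h1]; rfl, by rw [h1]; rfl, fun hs0 h => ?_⟩
    replace h := congrArg WithLp.ofLp h
    rw [h1, h2] at h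
    have := congrFun h 0
    have e1 : (![s / 2 ^ (n+1), 0] : Fin 2 → ℝ) 0 = s / 2 ^ (n+1) := rfl
    have e2 : (![s / 2 ^ n, 0] : Fin 2 → ℝ) 0 = s / 2 ^ n := rfl
    rw [e1, e2] at this
    have h2n : (0:ℝ) < 2 ^ n := by positivity
    rw [pow_succ] at this
    have : s = 0 := by field_simp at this; linarith
    exact hs0 this
  · -- tendsto
    have hTends : Filter.Tendsto (fun n : ℕ => (!₂[s / 2 ^ n, 0] : EuclideanSpace ℝ (Fin 2)))
        Filter.atTop (nhds 0) := by
      have h0 : Filter.Tendsto (fun n : ℕ => s / 2 ^ n) Filter.atTop (nhds 0) := by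
        have := tendsto_pow_atTop_nhds_zero_of_lt_one (by norm_num : (0:ℝ) ≤ 1/2) (by norm_num : (1:ℝ)/2 < 1)
        have := this.const_mul s
        simp only [mul_zero] at this
        convert this using 2 with n
        rw [div_pow, one_pow, div_eq_mul_inv, div_eq_mul_inv, mul_comm]
        ring_nf
      have : Filter.Tendsto (fun n : ℕ => (s / 2 ^ n) • (!₂[1, 0] : EuclideanSpace ℝ (Fin 2)))
          Filter.atTop (nhds 0) := by
        have := h0.smul_const (!₂[1, 0] : EuclideanSpace ℝ (Fin 2))
        rwa [zero_smul] at this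
      convert this using 2 with n
      ext i
      fin_cases i
      · show s / 2 ^ n = (s / 2 ^ n) • (!₂[(1:ℝ), 0] : EuclideanSpace ℝ (Fin 2)) 0
        show s / 2 ^ n = (s / 2 ^ n) * 1
        ring
      · show (0:ℝ) = (s / 2 ^ n) • (!₂[(1:ℝ), 0] : EuclideanSpace ℝ (Fin 2)) 1
        show (0:ℝ) = (s / 2 ^ n) * 0
        ring
    exact hTends.congr' (by
      filter_upwards [Filter.eventually_ge_atTop 1] with n hn
      exact (WithLp.ofLp_injective (p := 2) (iter n hn)).symm)
  · -- T 0 = 0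
    have hA0 : PA 0 = 0 := by
      have := (hPA 0).2 0 (by simp [Set.mem_setOf_eq])
      simp only [sub_zero, zero_sub, norm_neg, norm_zero] at this
      have : ‖PA 0‖ = 0 := le_antisymm this (norm_nonneg _)
      simpa using this
    have hB0 : PB 0 = 0 := by
      have := (hPB 0).2 0 (by simp [Set.mem_setOf_eq])
      simp only [sub_zero, zero_sub, norm_neg, norm_zero] at this
      have : ‖PB 0‖ = 0 := le_antisymm this (norm_nonneg _)
      simpa using this
    rw [hT, hA0, hB0]
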